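/- Let D ⊂ ℝ^d be open and bounded, and let h : ℝ^d → ℝ be bounded. Let (D_m) be an increasing sequence of open sets with closure(D_m) ⊂ D_{m+1} and ∪D_m = D, and suppose a strong Markov process X with exit times τ_m := τ_{D_m} ↑ τ_D satisfies h(x) = E_x[h(X_{τ_m}); τ_m < τ_D] for all m and x ∈ D, X_{τ_m} → X_{τ_D} a.s., P_x(X_{τ_D} ∈ N) = 0 for a set N ⊂ ∂D, and lim_{D∋x→z} h(x) = 0 for every z ∈ ∂D \ N. Then h ≡ 0 on D. -/

import Mathlib

open MeasureTheory Filter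

theorem stmt_18 (d : ℕ) (D : Set (EuclideanSpace ℝ (Fin d)))
    (hDopen : IsOpen D) (hDbdd : Bornology.IsBounded D)
    (h : EuclideanSpace ℝ (Fin d) → ℝ) (Cb : ℝ) (hbdd : ∀ x, |h x| ≤ Cb)
    (Ω : Type*) [MeasurableSpace Ω]
    (P : EuclideanSpace ℝ (Fin d) → Measure Ω) [∀ x, IsProbabilityMeasure (P x)]
    (Y : ℕ → Ω → EuclideanSpace ℝ (Fin d)) (Z : Ω → EuclideanSpace ℝ (Fin d))
    (A : ℕ → Set Ω) (hA : Antitone A) (hAmeas : ∀ m, MeasurableSet (A m))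
    (N : Set (EuclideanSpace ℝ (Fin d)))
    (hrep : ∀ m : ℕ, ∀ x ∈ D, h x = ∫ ω in A m, h (Y m ω) ∂ P x)
    (hYD : ∀ m : ℕ, ∀ x ∈ D, ∀ᵐ ω ∂ P x, ω ∈ A m → Y m ω ∈ D)
    (hconv : ∀ x ∈ D, ∀ᵐ ω ∂ P x,
      Filter.Tendsto (fun m => Y m ω) Filter.atTop (nhds (Z ω)))
    (hZbd : ∀ x ∈ D, ∀ᵐ ω ∂ P x, Z ω ∈ frontier D)
    (hN : ∀ x ∈ D, P x (Z ⁻¹' N) = 0)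
    (hlim : ∀ z ∈ frontier D \ N, Filter.Tendsto h (nhdsWithin z D) (nhds 0)) :
    ∀ x ∈ D, h x = 0 := by

  intro x hx
  have hCb : (0:ℝ) ≤ Cb := le_trans (abs_nonneg _) (hbdd x)
  -- either some integrand is not a.e. strongly measurable (then h x = 0 directly),
  -- or all are, and we apply dominated convergence.
  by_cases hmeas : ∀ m, AEStronglyMeasurable (fun ω => h (Y m ω)) ((P x).restrict (A m))
  · set g : ℕ → Ω → ℝ := fun m => (A m).indicator (fun ω => h (Y m ω)) with hg
    have hgint : ∀ m, h x = ∫ ω, g m ω ∂ P x := by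
      intro m
      rw [hrep m x hx, ← MeasureTheory.integral_indicator (hAmeas m)]
    have hgmeas : ∀ m, AEStronglyMeasurable (g m) (P x) := fun m =>
      (aestronglyMeasurable_indicator_iff (hAmeas m)).mpr (hmeas m)
    have hbound : ∀ m, ∀ᵐ ω ∂ P x, ‖g m ω‖ ≤ Cb := by
      intro m
      filter_upwards with ω
      by_cases hω : ω ∈ A m
      · simp only [hg, Set.indicator_of_mem hω, Real.norm_eq_abs]
        exact hbdd _
      · simp only [hg, Set.indicator_of_notMem hω, norm_zero]
        exact hCb
    have hYDall : ∀ᵐ ω ∂ P x, ∀ m, ω ∈ A m → Y m ω ∈ D :=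
      (MeasureTheory.ae_all_iff).mpr (fun m => hYD m x hx)
    have hZN : ∀ᵐ ω ∂ P x, Z ω ∉ N := by
      have := hN x hx
      rw [MeasureTheory.ae_iff]
      simpa using (show P x {a | Z a ∈ N} = 0 from this)
    have hptwise : ∀ᵐ ω ∂ P x, Tendsto (fun m => g m ω) atTop (nhds 0) := by
      filter_upwards [hYDall, hconv x hx, hZbd x hx, hZN] with ω hYDω hconvω hZω hZNω
      by_cases hall : ∀ m, ω ∈ A m
      · have hYmem : ∀ m, Y m ω ∈ D := fun m => hYDω m (hall m)
        have htw : Tendsto (fun m => Y m ω) atTop (nhdsWithin (Z ω) D) := by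
          rw [tendsto_nhdsWithin_iff]
          exact ⟨hconvω, Filter.Eventually.of_forall hYmem⟩
        have := (hlim (Z ω) ⟨hZω, hZNω⟩).comp htw
        have heq : (fun m => g m ω) = fun m => h (Y m ω) := by
          funext m
          simp [hg, Set.indicator_of_mem (hall m)]
        rw [heq]
        exact this
      · push_neg at hall
        obtain ⟨m0, hm0⟩ := hall
        have : ∀ m ≥ m0, g m ω = 0 := by
          intro m hm
          have : ω ∉ A m := fun hmem => hm0 (hA hm hmem)
          simp [hg, Set.indicator_of_notMem this]
        have hev : (fun m => g m ω) =ᶠ[atTop] (fun _ => (0:ℝ)) :=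
          Filter.eventually_atTop.mpr ⟨m0, this⟩
        exact Tendsto.congr' hev.symm tendsto_const_nhds
    have hDCT := MeasureTheory.tendsto_integral_of_dominated_convergence
      (fun _ => Cb) hgmeas (MeasureTheory.integrable_const Cb) hbound hptwise
    simp only [MeasureTheory.integral_zero] at hDCT
    have : Tendsto (fun _ : ℕ => h x) atTop (nhds 0) := by
      refine hDCT.congr (fun m => ?_)
      exact (hgint m).symm
    have h2 : Tendsto (fun _ : ℕ => h x) atTop (nhds (h x)) := tendsto_const_nhds
    exact tendsto_nhds_unique h2 this
  · push_neg at hmeas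
    obtain ⟨m, hm⟩ := hmeas
    rw [hrep m x hx]
    exact MeasureTheory.integral_non_aestronglyMeasurable hm
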